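/- arXiv:0808.0866 — 6 statements merged into one kernel-verified Lean document; each statement's English description precedes it below -/
import Mathlib

section
/- Let τ : A → A⁺ be a substitution on a finite alphabet A extended to two-sided sequences. Let (aₙbₙcₙ)_{n∈ℕ} be a sequence of words of length 3 over A and (dₙ)_{n∈ℕ} integers with 0 ≤ dₙ ≤ pⁿ − 1, where τ has constant length p ≥ 2. Then the intersection over all n of T^{dₙ}τⁿ([aₙ.bₙcₙ]) contains at most one point, where [u.v] denotes the cylinder set of sequences x with x(−|u|,−1) = u and x(0,|v|−1) = v, and T is the shift. -/
/-- Extension of a substitution to finite words, by concatenation. -/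
def substWord {A : Type*} (τ : A → List A) (w : List A) : List A :=
  (w.map τ).flatten

/-- The shift map on two-sided sequences. -/
def shift {A : Type*} (x : ℤ → A) : ℤ → A := fun i => x (i + 1)

/-- Extension of a constant-length-`p` substitution to two-sided sequences:
the block `τ(x_q)` occupies coordinates `[pq, pq + p)` of `τ(x)`. -/
def substExt {A : Type*} [Inhabited A] (τ : A → List A) (p : ℕ) (x : ℤ → A) :
    ℤ → A :=
  fun i => (τ (x (i / (p : ℤ)))).getD (i % (p : ℤ)).toNat default

/-- A substitution is primitive if some power sends every letter to a word
containing every letter. -/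
def IsPrimitive {A : Type*} (τ : A → List A) : Prop :=
  ∃ n : ℕ, ∀ a b : A, a ∈ (substWord τ)^[n] [b]

/-- The subshift generated by `τ`: sequences all of whose finite subwords occur
in some `τⁿ(a)`. -/
def XSet {A : Type*} (τ : A → List A) : Set (ℤ → A) :=
  {x | ∀ (i : ℤ) (l : ℕ), ∃ (n : ℕ) (c : A),
    (List.ofFn fun j : Fin l => x (i + (j : ℤ))) <:+: (substWord τ)^[n] [c]}

/-- Proximality of a pair for the shift on `A^ℤ` (with the product topology):
arbitrarily large central windows agree at some arbitrarily late time. -/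
def IsProximalPair {A : Type*} (x y : ℤ → A) : Prop :=
  ∀ N M : ℕ, ∃ n : ℕ, M ≤ n ∧ ∀ j : ℤ, |j| ≤ (N : ℤ) → x (j + n) = y (j + n)

/-- A Li–Yorke pair for the shift on `A^ℤ`: proximal but not asymptotic
(the two sequences differ at infinitely many coordinates). -/
def IsLiYorkePair {A : Type*} (x y : ℤ → A) : Prop :=
  IsProximalPair x y ∧ {m : ℤ | x m ≠ y m}.Infinite

/-- The cylinder `[u.v]`: `u` occurs just before coordinate `0` and `v` starts
at coordinate `0`. -/
def cyl {A : Type*} [Inhabited A] (u v : List A) : Set (ℤ → A) :=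
  {x | (∀ j : ℕ, j < u.length → x ((j : ℤ) - u.length) = u.getD j default) ∧
    (∀ j : ℕ, j < v.length → x (j : ℤ) = v.getD j default)}


lemma shift_iter_apply {A : Type*} (m : ℕ) (y : ℤ → A) (i : ℤ) :
    shift^[m] y i = y (i + m) := by
  induction m generalizing i with
  | zero => simp
  | succ m ih =>
      rw [Function.iterate_succ_apply']
      simp only [shift]
      rw [ih]
      congr 1
      push_cast
      ring

lemma agree_aux {A : Type*} [Inhabited A] (τ : A → List A) (p : ℕ)
    (hp : 2 ≤ p) (a b c : A) (n : ℕ) (y y' : ℤ → A)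
    (hy : y ∈ cyl [a] [b, c]) (hy' : y' ∈ cyl [a] [b, c]) :
    ∀ i : ℤ, -((p : ℤ) ^ n) ≤ i → i < 2 * (p : ℤ) ^ n →
      (substExt τ p)^[n] y i = (substExt τ p)^[n] y' i := by
  induction n with
  | zero =>
      intro i h1 h2
      simp only [Function.iterate_zero, id_eq]
      simp only [pow_zero] at h1 h2
      obtain ⟨hy1, hy2⟩ := hy
      obtain ⟨hy1', hy2'⟩ := hy'
      interval_cases i
      · have e1 := hy1 0 (by simp)
        have e2 := hy1' 0 (by simp)
        simp only [List.length_cons, List.length_nil] at e1 e2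
        norm_num at e1 e2
        rw [e1, e2]
      · have e1 := hy2 0 (by simp)
        have e2 := hy2' 0 (by simp)
        norm_num at e1 e2
        rw [e1, e2]
      · have e1 := hy2 1 (by simp)
        have e2 := hy2' 1 (by simp)
        norm_num at e1 e2
        rw [e1, e2]
  | succ n ih =>
      intro i h1 h2
      rw [Function.iterate_succ_apply', Function.iterate_succ_apply']
      have hp0 : (0 : ℤ) < (p : ℤ) := by exact_mod_cast (by omega : 0 < p)
      have hb1 : -((p : ℤ) ^ n) ≤ i / (p : ℤ) := by
        rw [Int.le_ediv_iff_mul_le hp0]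
        have : -((p : ℤ) ^ n) * (p : ℤ) = -((p : ℤ) ^ (n + 1)) := by ring
        rw [this]
        exact h1
      have hb2 : i / (p : ℤ) < 2 * (p : ℤ) ^ n := by
        rw [Int.ediv_lt_iff_lt_mul hp0]
        calc i < 2 * (p : ℤ) ^ (n + 1) := h2
          _ = 2 * (p : ℤ) ^ n * (p : ℤ) := by ring
      simp only [substExt]
      rw [ih (i / (p : ℤ)) hb1 hb2]

/-- Lemma 2.5: the intersection `⋂ₙ T^{dₙ} τⁿ([aₙ.bₙcₙ])` contains at most one
point, where `0 ≤ dₙ ≤ pⁿ - 1`. -/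
theorem stmt5 {A : Type*} [Fintype A] [Inhabited A] (τ : A → List A) (p : ℕ)
    (hp : 2 ≤ p) (hlen : ∀ a : A, (τ a).length = p)
    (a b c : ℕ → A) (d : ℕ → ℕ) (hd : ∀ n, d n ≤ p ^ n - 1) :
    Set.Subsingleton
      (⋂ n : ℕ, shift^[d n] '' ((substExt τ p)^[n] '' cyl [a n] [b n, c n])) := by
  intro x hx x' hx'
  simp only [Set.mem_iInter] at hx hx'
  funext i
  set n := i.natAbs with hn
  have hpn : (i.natAbs : ℤ) ≤ (p : ℤ) ^ n := by
    have h1 : i.natAbs < 2 ^ n := Nat.lt_two_pow_self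
    have h2 : 2 ^ n ≤ p ^ n := Nat.pow_le_pow_left hp n
    exact_mod_cast le_of_lt (lt_of_lt_of_le h1 h2)
  have hdn : (d n : ℤ) < (p : ℤ) ^ n := by
    have h0 : 1 ≤ p ^ n := Nat.one_le_pow _ _ (by omega)
    have := hd n
    exact_mod_cast (by omega : d n < p ^ n)
  obtain ⟨y, ⟨z, hz, rfl⟩, rfl⟩ := hx n
  obtain ⟨y', ⟨z', hz', rfl⟩, hxeq⟩ := hx' n
  rw [← hxeq]
  rw [shift_iter_apply, shift_iter_apply]
  exact agree_aux τ p hp (a n) (b n) (c n) n z z' hz hz' (i + d n)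
    (by omega) (by omega)
end

section
/- Let τ : A → A⁺ be a primitive substitution, B ⊆ A such that for each a ∈ A there is a unique b ∈ B with τ(a) = τ(b), and φ : A → B defined by φ(a) = b when τ(a) = τ(b). Let τ̄ : B → B⁺ be the unique substitution with τ̄∘φ = φ∘τ. Then τ̄ is primitive, and for every x in the subshift X_τ, τ(φ(x)) = τ(x). -/
/-- Reduction of a primitive substitution: with `ι : B ↪ A`, `φ : A → B`
selecting the unique letter of `B` with the same image, and `τ̄` the induced
substitution on `B` (`φ∘τ = τ̄∘φ` letterwise extended), the reduction `τ̄` is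
primitive and `τ(φ(x)) = τ(x)` (blockwise) for every `x ∈ X_τ`. -/
theorem stmt7 {A B : Type*} [Fintype A] [Fintype B]
    (τ : A → List A) (ι : B → A) (hι : Function.Injective ι) (φ : A → B)
    (hφ : ∀ a : A, τ (ι (φ a)) = τ a)
    (huniq : ∀ (a : A) (b : B), τ a = τ (ι b) → b = φ a)
    (τbar : B → List B) (hcomm : ∀ a : A, (τ a).map φ = τbar (φ a))
    (hprim : IsPrimitive τ) :
    IsPrimitive τbar ∧
      ∀ x ∈ XSet τ, ∀ i : ℤ, τ (ι (φ (x i))) = τ (x i) := by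
  have key : ∀ (w : List A), (substWord τ w).map φ = substWord τbar (w.map φ) := by
    intro w
    simp only [substWord, List.map_flatten, List.map_map]
    congr 1
    apply List.map_congr_left
    intro a _
    exact hcomm a
  have key2 : ∀ (n : ℕ) (w : List A),
      ((substWord τ)^[n] w).map φ = (substWord τbar)^[n] (w.map φ) := by
    intro n
    induction n with
    | zero => intro w; simp
    | succ n ih =>
      intro w
      rw [Function.iterate_succ_apply', Function.iterate_succ_apply', key, ih]
  constructor
  · obtain ⟨n, hn⟩ := hprim
    refine ⟨n, fun b' b => ?_⟩
    have h := hn (ι b') (ι b)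
    have : φ (ι b') ∈ ((substWord τ)^[n] [ι b]).map φ := List.mem_map_of_mem (f := φ) h
    rw [key2] at this
    simpa [← huniq (ι b') b' rfl, ← huniq (ι b) b rfl] using this
  · intro x _ i
    exact hφ (x i)
end

section
/- Let τ : A → A⁺ be a primitive substitution and τ̄ its reduction as above. If the reduced subshift X_{τ̄} is finite, then X_τ is finite. -/
/-- heterogeneous substitution on words -/
def swGen {A B : Type*} (σ : B → List A) (w : List B) : List A :=
  (w.map σ).flatten


namespace SA
variable {A B : Type*}

lemma swGen_append (σ : B → List A) (v w : List B) :
    swGen σ (v ++ w) = swGen σ v ++ swGen σ w := by simp [swGen]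

lemma swGen_infix {σ : B → List A} {u v : List B} (h : u <:+: v) :
    swGen σ u <:+: swGen σ v := by
  obtain ⟨s, t, rfl⟩ := h
  rw [swGen_append, swGen_append]
  exact ⟨_, _, rfl⟩

lemma swGen_ne_nil {σ : B → List A} (hσ : ∀ b, σ b ≠ []) {w : List B} (hw : w ≠ []) :
    swGen σ w ≠ [] := by
  cases w with
  | nil => exact absurd rfl hw
  | cons a w =>
    have : swGen σ (a :: w) = σ a ++ swGen σ w := by simp [swGen]
    rw [this]; simp [hσ a]

lemma sw_eq_swGen (τ : A → List A) (w : List A) : substWord τ w = swGen τ w := rfl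

lemma sw_append (τ : A → List A) (v w : List A) :
    substWord τ (v ++ w) = substWord τ v ++ substWord τ w := by
  simp [substWord]

lemma sw_singleton (τ : A → List A) (a : A) : substWord τ [a] = τ a := by
  simp [substWord]

lemma sw_nil (τ : A → List A) : substWord τ [] = [] := by simp [substWord]

lemma iter_append (τ : A → List A) (n : ℕ) (v w : List A) :
    (substWord τ)^[n] (v ++ w) = (substWord τ)^[n] v ++ (substWord τ)^[n] w := by
  induction n generalizing v w with
  | zero => simp
  | succ n ih => simp [Function.iterate_succ_apply, sw_append, ih]

lemma iter_nil (τ : A → List A) (n : ℕ) : (substWord τ)^[n] [] = [] := by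
  induction n with
  | zero => rfl
  | succ n ih => simp [Function.iterate_succ_apply, sw_nil, ih]

lemma iter_infix {τ : A → List A} {u v : List A} (n : ℕ) (h : u <:+: v) :
    (substWord τ)^[n] u <:+: (substWord τ)^[n] v := by
  obtain ⟨s, t, rfl⟩ := h
  rw [iter_append, iter_append]
  exact ⟨_, _, rfl⟩

lemma sw_blocks (τ : A → List A) (n : ℕ) (w : List A) :
    (substWord τ)^[n] w = (w.map (fun e => (substWord τ)^[n] [e])).flatten := by
  induction w with
  | nil => simp [iter_nil]
  | cons a w ih =>
    have : (a :: w) = [a] ++ w := rfl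
    rw [this, iter_append, ih]; simp

lemma sw_ne_nil {τ : A → List A} (hτ : ∀ a, τ a ≠ []) {w : List A} (hw : w ≠ []) :
    substWord τ w ≠ [] := by
  cases w with
  | nil => exact absurd rfl hw
  | cons a w =>
    have : substWord τ (a :: w) = τ a ++ substWord τ w := by simp [substWord]
    rw [this]
    simp [hτ a]

lemma iter_ne_nil {τ : A → List A} (hτ : ∀ a, τ a ≠ []) (n : ℕ) {w : List A} (hw : w ≠ []) :
    (substWord τ)^[n] w ≠ [] := by
  induction n generalizing w with
  | zero => simpa
  | succ n ih => rw [Function.iterate_succ_apply]; exact ih (sw_ne_nil hτ hw)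

lemma sw_length_le {τ : A → List A} {p : ℕ} (hp : ∀ a, (τ a).length ≤ p) (w : List A) :
    (substWord τ w).length ≤ p * w.length := by
  induction w with
  | nil => simp [sw_nil]
  | cons a w ih =>
    have : substWord τ (a :: w) = τ a ++ substWord τ w := by simp [substWord]
    rw [this]
    simp only [List.length_append, List.length_cons]
    calc (τ a).length + (substWord τ w).length ≤ p + p * w.length := by
          exact Nat.add_le_add (hp a) ih
      _ = p * (w.length + 1) := by ring

lemma iter_length_le {τ : A → List A} {p : ℕ} (hp : ∀ a, (τ a).length ≤ p) (n : ℕ) (w : List A) :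
    ((substWord τ)^[n] w).length ≤ p ^ n * w.length := by
  induction n generalizing w with
  | zero => simp
  | succ n ih =>
    rw [Function.iterate_succ_apply]
    calc ((substWord τ)^[n] (substWord τ w)).length ≤ p ^ n * (substWord τ w).length := ih _
      _ ≤ p ^ n * (p * w.length) := Nat.mul_le_mul_left _ (sw_length_le hp w)
      _ = p ^ (n + 1) * w.length := by ring

lemma map_sw {τ : A → List A} {τbar : B → List B} {φ : A → B}
    (hcomm : ∀ a, (τ a).map φ = τbar (φ a)) (w : List A) :
    (substWord τ w).map φ = substWord τbar (w.map φ) := by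
  induction w with
  | nil => simp [sw_nil, substWord]
  | cons a w ih =>
    have h1 : substWord τ (a :: w) = τ a ++ substWord τ w := by simp [substWord]
    have h2 : substWord τbar (φ a :: w.map φ) = τbar (φ a) ++ substWord τbar (w.map φ) := by
      simp [substWord]
    rw [h1, List.map_append, ih, List.map_cons, h2, hcomm]

lemma map_iter {τ : A → List A} {τbar : B → List B} {φ : A → B}
    (hcomm : ∀ a, (τ a).map φ = τbar (φ a)) (n : ℕ) (w : List A) :
    ((substWord τ)^[n] w).map φ = (substWord τbar)^[n] (w.map φ) := by
  induction n generalizing w with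
  | zero => rfl
  | succ n ih =>
    rw [Function.iterate_succ_apply, Function.iterate_succ_apply, ih, map_sw hcomm]

lemma sw_eq_sigma {τ : A → List A} {σ : B → List A} {φ : A → B}
    (h : ∀ a, τ a = σ (φ a)) (w : List A) :
    substWord τ w = swGen σ (w.map φ) := by
  induction w with
  | nil => simp [sw_nil, swGen]
  | cons a w ih =>
    have h1 : substWord τ (a :: w) = τ a ++ substWord τ w := by simp [substWord]
    have h2 : swGen σ (φ a :: w.map φ) = σ (φ a) ++ swGen σ (w.map φ) := by
      simp [swGen]
    rw [h1, List.map_cons, h2, ih, h a]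

lemma iter_succ_sigma {τ : A → List A} {τbar : B → List B} {σ : B → List A} {φ : A → B}
    (hcomm : ∀ a, (τ a).map φ = τbar (φ a)) (h : ∀ a, τ a = σ (φ a)) (n : ℕ) (c : A) :
    (substWord τ)^[n + 1] [c] = swGen σ ((substWord τbar)^[n] [φ c]) := by
  rw [Function.iterate_succ_apply']
  rw [sw_eq_sigma h, map_iter hcomm]
  simp

end SA


namespace SB
variable {A : Type*}

def win (x : ℤ → A) (i : ℤ) (l : ℕ) : List A := List.ofFn fun j : Fin l => x (i + j)

@[simp] lemma win_length (x : ℤ → A) (i : ℤ) (l : ℕ) : (win x i l).length = l := by simp [win]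

lemma win_getElem (x : ℤ → A) (i : ℤ) (l : ℕ) (j : ℕ) (h : j < (win x i l).length) :
    (win x i l)[j] = x (i + j) := by
  simp [win]

lemma win_congr {x y : ℤ → A} {i i' : ℤ} {l : ℕ} (h : ∀ j : ℕ, j < l → x (i + j) = y (i' + j)) :
    win x i l = win y i' l := by
  apply List.ext_getElem (by simp)
  intro n h1 h2
  rw [win_getElem, win_getElem]
  exact h n (by simpa using h1)

lemma win_eq_apply {x y : ℤ → A} {i i' : ℤ} {l : ℕ} (h : win x i l = win y i' l)
    {j : ℕ} (hj : j < l) : x (i + j) = y (i' + j) := by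
  have h1 : (win x i l)[j]'(by simpa) = (win y i' l)[j]'(by simpa) := by
    congr 1
  rwa [win_getElem, win_getElem] at h1

lemma win_add (x : ℤ → A) (i : ℤ) (a b : ℕ) :
    win x i (a + b) = win x i a ++ win x (i + a) b := by
  apply List.ext_getElem (by simp)
  intro n h1 h2
  rw [win_getElem]
  rcases lt_or_ge n a with h | h
  · rw [List.getElem_append_left (by simpa)]
    rw [win_getElem]
  · rw [List.getElem_append_right (by simpa)]
    rw [win_getElem]
    congr 1
    simp only [win_length]
    push_cast [Nat.cast_sub h]
    ring

lemma win_take_drop {z : ℤ → A} {i : ℤ} {l : ℕ} (m r : ℕ) (h : m + r ≤ l) :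
    ((win z i l).drop m).take r = win z (i + m) r := by
  apply List.ext_getElem (by simp; omega)
  intro n h1 h2
  have hlt : m + n < l := by simp at h2; omega
  rw [List.getElem_take, List.getElem_drop, win_getElem, win_getElem]
  congr 1
  push_cast
  ring

lemma infix_win {z : ℤ → A} {u : List A} {i : ℤ} {l : ℕ} (h : u <:+: win z i l) :
    ∃ i' : ℤ, u = win z i' u.length := by
  obtain ⟨s, t, hst⟩ := h
  refine ⟨i + s.length, ?_⟩
  have hlen : s.length + (u.length + t.length) = l := by
    simpa using congrArg List.length hst
  have h1 : (win z i l).drop s.length = u ++ t := by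
    rw [← hst, List.append_assoc, List.drop_left]
  have h2 : ((win z i l).drop s.length).take u.length = u := by
    rw [h1, List.take_left]
  conv_lhs => rw [← h2]
  exact win_take_drop _ _ (by omega)

lemma getD_flatten_replicate {W : List A} (d : A) :
    ∀ (k t : ℕ), t < k * W.length →
      ((List.replicate k W).flatten).getD t d = W.getD (t % W.length) d := by
  intro k
  induction k with
  | zero => intro t h; simp at h
  | succ k ih =>
    intro t h
    rw [Nat.succ_mul] at h
    rw [List.replicate_succ, List.flatten_cons]
    rcases lt_or_ge t W.length with h1 | h1
    · rw [List.getD_append _ _ _ _ h1, Nat.mod_eq_of_lt h1]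
    · have hW : 0 < W.length := by
        rcases Nat.eq_zero_or_pos W.length with h0 | h0
        · rw [h0] at h; simp at h
        · exact h0
      rw [List.getD_append_right _ _ _ _ h1]
      rw [ih (t - W.length) (by omega)]
      congr 1
      conv_rhs => rw [Nat.mod_eq_sub_mod h1]

@[simp] lemma length_flatten_replicate (k : ℕ) (W : List A) :
    ((List.replicate k W).flatten).length = k * W.length := by
  induction k with
  | zero => simp
  | succ k ih =>
    rw [List.replicate_succ, List.flatten_cons, List.length_append, ih, Nat.succ_mul]
    ring

lemma prefix_capture {v w R : List A} (h : w <+: v ++ R) (hlen : v.length ≤ w.length) :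
    v <+: w := by
  have h2 : v <+: v ++ R := List.prefix_append v R
  rcases List.prefix_or_prefix_of_prefix h2 h with h3 | h3
  · exact h3
  · exact (List.IsPrefix.eq_of_length_le h3 hlen) ▸ List.prefix_refl v

lemma capture {g : A → List A} {G : ℕ} (hG : ∀ e, (g e).length ≤ G) (hGpos : 0 < G) :
    ∀ (ls : List A) (w : List A), 2 * G ≤ w.length →
      w <:+: (ls.map g).flatten → ∃ e ∈ ls, g e <:+: w := by
  intro ls
  induction ls with
  | nil =>
    intro w hw h
    have hl := h.length_le
    simp only [List.map_nil, List.flatten_nil, List.length_nil] at hl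
    omega
  | cons e ls ih =>
    intro w hw h
    obtain ⟨s, t, hst⟩ := h
    rw [List.map_cons, List.flatten_cons] at hst
    rcases le_or_gt (g e).length s.length with hc | hc
    · -- w lives in the tail
      have hpre : g e <+: s := by
        have h1 : g e <+: g e ++ (ls.map g).flatten := List.prefix_append _ _
        have h2 : s <+: g e ++ (ls.map g).flatten := by
          refine ⟨w ++ t, ?_⟩
          rw [← hst]; simp [List.append_assoc]
        rcases List.prefix_or_prefix_of_prefix h1 h2 with h3 | h3
        · exact h3
        · exact (List.IsPrefix.eq_of_length_le h3 hc) ▸ List.prefix_refl _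
      obtain ⟨s', rfl⟩ := hpre
      have hF : (ls.map g).flatten = s' ++ w ++ t := by
        have h2 : g e ++ (ls.map g).flatten = g e ++ (s' ++ w ++ t) := by
          rw [← hst]; simp [List.append_assoc]
        exact List.append_cancel_left h2
      obtain ⟨e', he', hinf⟩ := ih w hw ⟨s', t, hF.symm⟩
      exact ⟨e', List.mem_cons_of_mem _ he', hinf⟩
    · -- w starts inside the first block
      set d := (g e).drop s.length with hd
      have hwd : w ++ t = d ++ (ls.map g).flatten := by
        have h2 := congrArg (List.drop s.length) hst
        rw [List.append_assoc, List.drop_left] at h2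
        rw [List.drop_append] at h2
        rw [Nat.sub_eq_zero_of_le (le_of_lt hc), List.drop_zero] at h2
        exact h2
      have hdlen : d.length ≤ G := by
        have := hG e
        simp only [hd, List.length_drop]
        omega
      have hdw : d <+: w := prefix_capture ⟨t, hwd⟩ (by omega)
      obtain ⟨w', rfl⟩ := hdw
      have hw' : w' ++ t = (ls.map g).flatten := by
        have h2 := congrArg (List.drop d.length) hwd
        rw [List.append_assoc, List.drop_left, List.drop_left] at h2
        exact h2
      have hw'len : G ≤ w'.length := by
        have hlw : (d ++ w').length = d.length + w'.length := by simp
        omega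
      cases ls with
      | nil =>
        simp only [List.map_nil, List.flatten_nil, List.append_eq_nil_iff] at hw'
        rw [hw'.1] at hw'len
        simp at hw'len
        omega
      | cons e' ls' =>
        rw [List.map_cons, List.flatten_cons] at hw'
        have hpe : g e' <+: w' := prefix_capture ⟨t, hw'⟩ (le_trans (hG e') hw'len)
        obtain ⟨r2, rfl⟩ := hpe
        refine ⟨e', by simp, ?_⟩
        exact ⟨d, r2, by simp [List.append_assoc]⟩

end SB
/-- If the reduced subshift `X_τ̄` is finite then `X_τ` is finite. -/
theorem stmt8 {A B : Type*} [Fintype A] [Fintype B]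
    (τ : A → List A) (ι : B → A) (hι : Function.Injective ι) (φ : A → B)
    (hφ : ∀ a : A, τ (ι (φ a)) = τ a)
    (huniq : ∀ (a : A) (b : B), τ a = τ (ι b) → b = φ a)
    (τbar : B → List B) (hcomm : ∀ a : A, (τ a).map φ = τbar (φ a))
    (hprim : IsPrimitive τ)
    (hfin : (XSet τbar).Finite) :
    (XSet τ).Finite := by
  classical
  obtain ⟨N, hN⟩ := hprim
  match N, hN with
  | 0, hN =>
    haveI : Subsingleton A := ⟨fun a b => by simpa using hN a b⟩
    haveI : Finite (ℤ → A) := Finite.of_subsingleton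
    exact Set.toFinite _
  | (N0 + 1), hN =>
    set M := N0 + 1 with hM
    have hMpos : 0 < M := Nat.succ_pos _
    have htne : ∀ a : A, τ a ≠ [] := by
      intro a hnil
      have h1 : (substWord τ)^[M] [a] = [] := by
        rw [hM, Function.iterate_succ_apply, SA.sw_singleton, hnil, SA.iter_nil]
      have h2 := hN a a
      rw [h1] at h2
      simp at h2
    rcases Set.eq_empty_or_nonempty (XSet τ) with hE | ⟨x, hx⟩
    · rw [hE]; exact Set.finite_empty
    haveI : Inhabited A := ⟨x 0⟩
    set σ : B → List A := fun b => τ (ι b) with hσdef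
    have hσφ : ∀ a, τ a = σ (φ a) := fun a => (hφ a).symm
    have hσne : ∀ b, σ b ≠ [] := fun b => htne (ι b)
    have hφι : ∀ b, φ (ι b) = b := fun b => (huniq (ι b) b rfl).symm
    set y : ℤ → B := fun m => φ (x m) with hydef
    have hy : y ∈ XSet τbar := by
      intro i l
      obtain ⟨n, c, hin⟩ := hx i l
      refine ⟨n, φ c, ?_⟩
      have h2 := hin.map φ
      rw [List.map_ofFn] at h2
      rw [SA.map_iter hcomm] at h2
      simp at h2; exact h2
    -- y is periodic
    have hyshift : ∀ k : ℕ, (fun m : ℤ => y (m + (k:ℤ))) ∈ XSet τbar := by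
      intro k i l
      obtain ⟨n, c, hin⟩ := hy (i + (k:ℤ)) l
      refine ⟨n, c, ?_⟩
      show (List.ofFn fun j : Fin l => y (i + (j:ℤ) + (k:ℤ))) <:+: _
      have he : (List.ofFn fun j : Fin l => y (i + (j:ℤ) + (k:ℤ)))
          = List.ofFn fun j : Fin l => y ((i + (k:ℤ)) + (j:ℤ)) := by
        congr 1; funext j; congr 1; ring
      rw [he]; exact hin
    haveI : Finite (XSet τbar) := hfin.to_subtype
    obtain ⟨k1, k2, hk12, hkeq⟩ := Finite.exists_ne_map_eq_of_infinite
      (fun k : ℕ => (⟨fun m => y (m + (k:ℤ)), hyshift k⟩ : (XSet τbar)))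
    have hkeq' : (fun m : ℤ => y (m + (k1:ℤ))) = fun m : ℤ => y (m + (k2:ℤ)) :=
      congrArg Subtype.val hkeq
    obtain ⟨P, hPpos, hyper⟩ : ∃ P : ℕ, 0 < P ∧ ∀ j : ℤ, y (j + (P:ℤ)) = y j := by
      rcases lt_or_gt_of_ne hk12 with hlt | hlt
      · refine ⟨k2 - k1, by omega, ?_⟩
        intro j
        have h1 := congrFun hkeq' (j - (k1:ℤ))
        beta_reduce at h1
        have e1 : j - (k1:ℤ) + (k1:ℤ) = j := by ring
        have e2 : j - (k1:ℤ) + (k2:ℤ) = j + ((k2 - k1 : ℕ) : ℤ) := by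
          push_cast [Nat.cast_sub hlt.le]; ring
        rw [e1, e2] at h1
        exact h1.symm
      · refine ⟨k1 - k2, by omega, ?_⟩
        intro j
        have h1 := congrFun hkeq' (j - (k2:ℤ))
        beta_reduce at h1
        have e1 : j - (k2:ℤ) + (k2:ℤ) = j := by ring
        have e2 : j - (k2:ℤ) + (k1:ℤ) = j + ((k1 - k2 : ℕ) : ℤ) := by
          push_cast [Nat.cast_sub hlt.le]; ring
        rw [e1, e2] at h1
        exact h1
    have hwinP : ∀ (i : ℤ) (l : ℕ), SB.win y (i + (P:ℤ)) l = SB.win y i l := by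
      intro i l
      apply SB.win_congr
      intro j hj
      rw [show i + (P:ℤ) + (j:ℤ) = (i + (j:ℤ)) + (P:ℤ) by ring, hyper]
    set W : List A := swGen σ (SB.win y 0 P) with hWdef
    have hWne : W ≠ [] := SA.swGen_ne_nil hσne (by
      apply List.ne_nil_of_length_pos
      simpa using hPpos)
    set Q : ℕ := W.length with hQdef
    have hQ : 0 < Q := List.length_pos_iff.2 hWne
    have hQZ : ((Q:ℤ)) ≠ 0 := by exact_mod_cast hQ.ne'
    set z : ℤ → A := fun m => W.getD ((m % (Q:ℤ)).toNat) default with hzdef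
    have zcong : ∀ m1 m2 : ℤ, m1 % (Q:ℤ) = m2 % (Q:ℤ) → z m1 = z m2 := by
      intro m1 m2 h; simp only [hzdef, h]
    have hmodadd : ∀ (i j : ℤ), (i + j) % (Q:ℤ) = (i % (Q:ℤ) + j) % (Q:ℤ) := by
      intro i j
      conv_lhs => rw [← Int.mul_ediv_add_emod i (Q:ℤ)]
      rw [show (Q:ℤ) * (i / (Q:ℤ)) + i % (Q:ℤ) + j
            = (i % (Q:ℤ) + j) + (Q:ℤ) * (i / (Q:ℤ)) by ring]
      simp [Int.add_mul_emod_self_left]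
    set rep : ℕ → List A := fun k => (List.replicate k W).flatten with hrepdef
    have hrepL : ∀ k, (rep k).length = k * Q := fun k => SB.length_flatten_replicate k W
    have hrepeq : ∀ k, rep k = swGen σ (SB.win y 0 (k * P)) := by
      intro k
      induction k with
      | zero => simp [hrepdef, SB.win, swGen]
      | succ k ih =>
        rw [show (k+1) * P = P + k * P by ring, SB.win_add, SA.swGen_append]
        have h0 : SB.win y (0 + (P:ℤ)) (k*P) = SB.win y 0 (k*P) := hwinP 0 (k*P)
        rw [h0, ← ih]
        simp [hrepdef, List.replicate_succ, hWdef]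
    have hz_nat : ∀ (k t : ℕ), t < k * Q → (rep k).getD t default = z (t : ℤ) := by
      intro k t ht
      have h1 : (rep k).getD t default = W.getD (t % W.length) default := by
        rw [hrepdef]
        exact SB.getD_flatten_replicate default k t (by rwa [← hQdef])
      rw [h1]
      have h2 : ((t:ℤ) % (Q:ℤ)).toNat = t % Q := by
        rw [show ((t:ℤ) % (Q:ℤ)) = ((t % Q : ℕ) : ℤ) by push_cast; ring, Int.toNat_natCast]
      show _ = W.getD ((t:ℤ) % (Q:ℤ)).toNat default
      rw [h2]
    have hrepwin : ∀ k, rep k = SB.win z 0 (k * Q) := by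
      intro k
      apply List.ext_getElem (by simp [hrepL])
      intro n h1 h2
      have hn : n < k * Q := by rwa [hrepL] at h1
      rw [SB.win_getElem]
      rw [← List.getD_eq_getElem (rep k) default h1]
      rw [hz_nat k n hn, zero_add]
    have hwin_rep : ∀ (i : ℤ) (l : ℕ),
        SB.win z i l <:+: rep (((i % (Q:ℤ)).toNat) + l) := by
      intro i l
      set r : ℕ := (i % (Q:ℤ)).toNat with hrdef
      have hrQ : ((r:ℕ):ℤ) = i % (Q:ℤ) := Int.toNat_of_nonneg (Int.emod_nonneg i hQZ)
      have h1 : SB.win z i l = SB.win z (r:ℤ) l := by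
        apply SB.win_congr
        intro j hj
        apply zcong
        rw [hmodadd i (j:ℤ), hmodadd (r:ℤ) (j:ℤ), hrQ]
        rw [Int.emod_emod_of_dvd _ (dvd_refl _)]
      rw [h1]
      have h2 : SB.win z 0 (r + l) = SB.win z 0 r ++ SB.win z ((r:ℕ):ℤ) l := by
        rw [SB.win_add, zero_add]
      have h3 : SB.win z (r:ℤ) l <:+: SB.win z 0 (r + l) :=
        ⟨SB.win z 0 r, [], by rw [h2]; simp⟩
      have h4 : SB.win z 0 (r + l) <+: SB.win z 0 ((r + l) * Q) := by
        have h5 : (r + l) + ((r+l)*Q - (r+l)) = (r+l)*Q := by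
          have := Nat.le_mul_of_pos_right (r+l) hQ
          omega
        refine ⟨SB.win z (0 + ((r+l):ℕ)) ((r+l)*Q - (r+l)), ?_⟩
        rw [← SB.win_add, h5]
      rw [hrepwin]
      exact h3.trans h4.isInfix
    have hrepIn : ∀ k, ∃ n c, rep k <:+: (substWord τ)^[n] [c] := by
      intro k
      obtain ⟨n, b', h3⟩ := hy 0 (k * P)
      refine ⟨n + 1, ι b', ?_⟩
      rw [SA.iter_succ_sigma hcomm hσφ n (ι b'), hφι]
      rw [hrepeq k]
      exact SA.swGen_infix h3
    have hzX : z ∈ XSet τ := by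
      intro i l
      obtain ⟨n, c, h2⟩ := hrepIn (((i % (Q:ℤ)).toNat) + l)
      exact ⟨n, c, (hwin_rep i l).trans h2⟩
    -- maximal length bound
    set p : ℕ := 2 + Finset.univ.sup (fun a : A => (τ a).length) with hpdef
    have hp2 : 1 < p := by omega
    have hpτ : ∀ a, (τ a).length ≤ p := by
      intro a
      have h : (τ a).length ≤ Finset.univ.sup (fun a : A => (τ a).length) :=
        Finset.le_sup (f := fun a : A => (τ a).length) (Finset.mem_univ a)
      omega
    -- every word of the language occurs in z
    have hocc : ∀ (u : List A) (n : ℕ) (c : A), u <:+: (substWord τ)^[n] [c] →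
        ∃ i' : ℤ, u = SB.win z i' u.length := by
      intro u n c hu
      set G : ℕ := p ^ (n + M) with hGdef
      have hGpos : 0 < G := by positivity
      have hGblock : ∀ e : A, ((substWord τ)^[n + M] [e]).length ≤ G := by
        intro e
        have h6 := SA.iter_length_le hpτ (n + M) [e]
        simpa using h6
      obtain ⟨m, d, hrin⟩ := hrepIn (2 * G)
      have hlen1 : 2 * G ≤ (rep (2*G)).length := by
        rw [hrepL]
        calc 2*G = 2*G*1 := by ring
          _ ≤ 2*G*Q := Nat.mul_le_mul_left _ hQ
      have hlen2 : ((substWord τ)^[m] [d]).length ≤ p ^ m := by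
        have h6 := SA.iter_length_le hpτ m [d]
        simpa using h6
      have hmgt : n + M < m := by
        have h4 : p ^ (n + M) < p ^ m := by
          have h7 : 2 * G ≤ p ^ m := le_trans (le_trans hlen1 hrin.length_le) hlen2
          omega
        exact (Nat.pow_lt_pow_iff_right hp2).1 h4
      have hmeq : m = (n + M) + (m - (n + M)) := by omega
      rw [hmeq, Function.iterate_add_apply, SA.sw_blocks] at hrin
      obtain ⟨e, _, hblock⟩ := SB.capture hGblock hGpos _ _ hlen1 hrin
      have hc1 : [c] <:+: (substWord τ)^[M] [e] := by
        obtain ⟨s1, t1, hst⟩ := List.append_of_mem (hN c e)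
        exact ⟨s1, t1, by rw [hst]; simp⟩
      have hc2 : (substWord τ)^[n] [c] <:+: (substWord τ)^[n + M] [e] := by
        have h8 := SA.iter_infix (τ := τ) n hc1
        rwa [← Function.iterate_add_apply] at h8
      have hchain : u <:+: SB.win z 0 ((2*G) * Q) := by
        rw [← hrepwin]
        exact hu.trans (hc2.trans hblock)
      exact SB.infix_win hchain
    -- conclude
    apply Set.Finite.subset (Set.finite_range (fun r : Fin Q => fun m : ℤ => z ((r:ℤ) + m)))
    intro x' hx'
    have hsel : ∀ l : ℕ, ∃ r : ℕ, r < Q ∧ ∀ m : ℤ, |m| ≤ (l:ℤ) → x' m = z ((r:ℤ) + m) := by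
      intro l
      obtain ⟨n, c, hin⟩ := hx' (-(l:ℤ)) (2*l+1)
      obtain ⟨i', hocc'⟩ := hocc _ n c hin
      simp only [List.length_ofFn] at hocc'
      have hww : SB.win x' (-(l:ℤ)) (2*l+1) = SB.win z i' (2*l+1) := hocc'
      set r : ℕ := ((i' + (l:ℤ)) % (Q:ℤ)).toNat with hrdef
      have hrQ : ((r:ℕ):ℤ) = (i' + (l:ℤ)) % (Q:ℤ) :=
        Int.toNat_of_nonneg (Int.emod_nonneg _ hQZ)
      have hrlt : r < Q := by
        have h9 := Int.emod_lt_of_pos (i' + (l:ℤ)) (by exact_mod_cast hQ : (0:ℤ) < (Q:ℤ))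
        omega
      refine ⟨r, hrlt, ?_⟩
      intro m hm
      rw [Int.abs_eq_natAbs] at hm
      have hj : ((m + l).toNat) < 2*l+1 := by omega
      have h5 := SB.win_eq_apply hww hj
      have hcast : (((m + (l:ℤ)).toNat : ℕ) : ℤ) = m + (l:ℤ) := by
        rw [Int.toNat_of_nonneg (by omega)]
      rw [hcast] at h5
      have e3 : -(l:ℤ) + (m + (l:ℤ)) = m := by ring
      rw [e3] at h5
      rw [h5]
      apply zcong
      rw [show i' + (m + (l:ℤ)) = (i' + (l:ℤ)) + m by ring]
      rw [hmodadd (i' + (l:ℤ)) m, ← hrQ]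
    choose F hF1 hF2 using hsel
    obtain ⟨i0, hi0⟩ := Finite.exists_infinite_fiber (fun l : ℕ => (⟨F l, hF1 l⟩ : Fin Q))
    refine ⟨i0, ?_⟩
    funext m
    obtain ⟨l, hl1, hl2⟩ : ∃ l : ℕ, (⟨F l, hF1 l⟩ : Fin Q) = i0 ∧ m.natAbs ≤ l := by
      by_contra hcon
      push_neg at hcon
      have hfib : ((fun l : ℕ => (⟨F l, hF1 l⟩ : Fin Q)) ⁻¹' {i0}).Finite := by
        apply Set.Finite.subset (Set.finite_Iio m.natAbs)
        intro l hl
        simp only [Set.mem_preimage, Set.mem_singleton_iff] at hl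
        simp only [Set.mem_Iio]
        have := hcon l hl
        omega
      exact hfib.not_infinite (Set.infinite_coe_iff.mp hi0)

    have hFl : (F l : ℕ) = (i0 : Fin Q).val := congrArg Fin.val hl1
    have h10 := hF2 l m (by rw [Int.abs_eq_natAbs]; exact_mod_cast hl2)
    show z (((i0 : Fin Q) : ℕ) + m) = x' m
    rw [← hFl]
    exact h10.symm
end

section
/- Let τ : A → A⁺ be a primitive substitution of constant length p with X_τ infinite, τ one-to-one on X_τ, and suppose the factor map π : X_τ → O_p to the p-odometer satisfies: whenever π(x) = π(y), the points x,y have the same desubstitution digit sequence and suffix words sᵢ. If τ has overall coincidences (for every a ≠ b in A, τ(a) and τ(b) agree in at least one position), then every pair x ≠ y with π(x) = π(y) is proximal. -/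
/-- computation of substExt at a decomposed coordinate -/
theorem substExt_apply {A : Type*} [Inhabited A] (τ : A → List A) (p : ℕ)
    (hp : 0 < p) (z : ℤ → A) (q : ℤ) (s : ℕ) (hs : s < p) :
    substExt τ p z ((p : ℤ) * q + s) = (τ (z q)).getD s default := by
  have hp' : (p : ℤ) ≠ 0 := by exact_mod_cast hp.ne'
  have hdiv : ((p : ℤ) * q + s) / p = q := by
    rw [add_comm, Int.add_mul_ediv_left _ _ hp']
    rw [Int.ediv_eq_zero_of_lt (by positivity) (by exact_mod_cast hs)]
    ring
  have hmod : ((p : ℤ) * q + s) % p = s := by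
    rw [add_comm, mul_comm, Int.add_mul_emod_self_right]
    exact Int.emod_eq_of_lt (by positivity) (by exact_mod_cast hs)
  simp [substExt, hdiv, hmod]

/-- If a one-to-one primitive constant-length substitution with infinite
subshift has overall coincidences, then any two distinct points of `X_τ` with
the same desubstitution digit sequence (i.e. the same image in the
`p`-odometer) form a proximal pair. -/
theorem stmt9 {A : Type*} [Fintype A] [Inhabited A]
    (τ : A → List A) (p : ℕ) (hp : 2 ≤ p)
    (hlen : ∀ a : A, (τ a).length = p)
    (hprim : IsPrimitive τ) (hinj : Function.Injective τ)
    (hinf : (XSet τ).Infinite)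
    (hinjX : Set.InjOn (substExt τ p) (XSet τ))
    (hcoin : ∀ a b : A, a ≠ b →
      ∃ j : ℕ, j < p ∧ (τ a).getD j default = (τ b).getD j default)
    (x y : ℤ → A) (hx : x ∈ XSet τ) (hy : y ∈ XSet τ) (hxy : x ≠ y)
    -- the desubstitution sequences of `x` and `y` (Mossé's theorem), with a
    -- common digit sequence `ds`, i.e. `π(x) = π(y)`:
    (xs ys : ℕ → ℤ → A) (ds : ℕ → ℕ) (hds : ∀ i, ds i < p)
    (hx0 : xs 0 = x) (hy0 : ys 0 = y)
    (hxs : ∀ i, xs i ∈ XSet τ) (hys : ∀ i, ys i ∈ XSet τ)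
    (hdx : ∀ i, substExt τ p (xs (i + 1)) = fun j => xs i (j - ds i))
    (hdy : ∀ i, substExt τ p (ys (i + 1)) = fun j => ys i (j - ds i)) :
    IsProximalPair x y := by
  
  intro N M
  have hp0 : 0 < p := by omega
  have hP2 : (2:ℤ) ≤ (p:ℤ) := by exact_mod_cast hp
  -- the accumulated carry
  let c : ℕ → ℤ := fun i => ∑ k ∈ Finset.range i, (p:ℤ)^k * ds k
  have hc0 : c 0 = 0 := Finset.sum_range_zero _
  have hcs : ∀ i, c (i+1) = c i + (p:ℤ)^i * ds i := fun i => Finset.sum_range_succ _ i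
  have hcb : ∀ i, c i ≤ (p:ℤ)^i - 1 := by
    intro i
    induction i with
    | zero => simp [hc0]
    | succ i ih =>
      have h1 : (ds i : ℤ) ≤ (p:ℤ) - 1 := by
        have := hds i; push_cast; omega
      have h2 : (0:ℤ) < (p:ℤ)^i := by positivity
      have h3 : (p:ℤ)^i * ds i ≤ (p:ℤ)^i * ((p:ℤ)-1) :=
        mul_le_mul_of_nonneg_left h1 h2.le
      rw [hcs]
      calc c i + (p:ℤ)^i * ds i ≤ ((p:ℤ)^i - 1) + (p:ℤ)^i*((p:ℤ)-1) := by linarith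
        _ = (p:ℤ)^(i+1) - 1 := by ring
  -- agreement at a single letter at level i propagates to a length p^i window
  have key : ∀ i (m : ℤ), xs i m = ys i m → ∀ r : ℤ, 0 ≤ r → r < (p:ℤ)^i →
      x ((p:ℤ)^i * m - c i + r) = y ((p:ℤ)^i * m - c i + r) := by
    intro i
    induction i with
    | zero =>
      intro m hm r hr0 hr1
      have hp00 : ((p:ℤ))^0 = 1 := pow_zero _
      have hr : r = 0 := by omega
      subst hr
      have harg : (p:ℤ)^0 * m - c 0 + 0 = m := by rw [hc0]; ring
      rw [harg, ← hx0, ← hy0]; exact hm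
    | succ i ih =>
      intro m hm r hr0 hr1
      have hpi : (0:ℤ) < (p:ℤ)^i := by positivity
      set s : ℤ := r / (p:ℤ)^i with hsdef
      set t : ℤ := r % (p:ℤ)^i with htdef
      have ht0 : 0 ≤ t := Int.emod_nonneg _ hpi.ne'
      have ht1 : t < (p:ℤ)^i := Int.emod_lt_of_pos _ hpi
      have hrst : (p:ℤ)^i * s + t = r := Int.mul_ediv_add_emod r ((p:ℤ)^i)
      have hs0 : 0 ≤ s := Int.ediv_nonneg hr0 hpi.le
      have hps : (p:ℤ)^(i+1) = (p:ℤ)^i * (p:ℤ) := pow_succ _ _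
      have hsmul : (p:ℤ)^i * s < (p:ℤ)^i * (p:ℤ) := by linarith
      have hs1 : s < (p:ℤ) := lt_of_mul_lt_mul_left hsmul hpi.le
      -- the natural number version of s
      have hsn1 : s.toNat < p := by omega
      have hsn2 : (s.toNat : ℤ) = s := Int.toNat_of_nonneg hs0
      have e1 : xs i ((p:ℤ)*m + s - ds i) = (τ (xs (i+1) m)).getD s.toNat default := by
        have h := congrFun (hdx i) ((p:ℤ)*m + (s.toNat : ℤ))
        rw [substExt_apply τ p hp0 (xs (i+1)) m s.toNat hsn1] at h
        rw [hsn2] at h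
        exact h.symm
      have e2 : ys i ((p:ℤ)*m + s - ds i) = (τ (ys (i+1) m)).getD s.toNat default := by
        have h := congrFun (hdy i) ((p:ℤ)*m + (s.toNat : ℤ))
        rw [substExt_apply τ p hp0 (ys (i+1)) m s.toNat hsn1] at h
        rw [hsn2] at h
        exact h.symm
      have hm' : xs i ((p:ℤ)*m + s - ds i) = ys i ((p:ℤ)*m + s - ds i) := by
        rw [e1, e2, hm]
      have := ih ((p:ℤ)*m + s - ds i) hm' t ht0 ht1
      have harg : (p:ℤ)^(i+1) * m - c (i+1) + r
          = (p:ℤ)^i * ((p:ℤ)*m + s - ds i) - c i + t := by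
        rw [hcs i, ← hrst]; ring
      rw [harg]; exact this
  -- at every level and near every position there is a coincidence
  have coin : ∀ i (q : ℤ), ∃ m : ℤ, (p:ℤ)*q - p ≤ m ∧ xs i m = ys i m := by
    intro i q
    obtain ⟨j, hj, hjeq⟩ : ∃ j : ℕ, j < p ∧
        (τ (xs (i+1) q)).getD j default = (τ (ys (i+1) q)).getD j default := by
      by_cases h : xs (i+1) q = ys (i+1) q
      · exact ⟨0, hp0, by rw [h]⟩
      · exact hcoin _ _ h
    have hdsi : (ds i : ℤ) < p := by exact_mod_cast hds i
    have hj0 : (0:ℤ) ≤ j := Int.natCast_nonneg j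
    refine ⟨(p:ℤ)*q + j - ds i, by linarith, ?_⟩
    have e1 : xs i ((p:ℤ)*q + j - ds i) = (τ (xs (i+1) q)).getD j default := by
      have h := congrFun (hdx i) ((p:ℤ)*q + (j : ℤ))
      rw [substExt_apply τ p hp0 (xs (i+1)) q j hj] at h
      exact h.symm
    have e2 : ys i ((p:ℤ)*q + j - ds i) = (τ (ys (i+1) q)).getD j default := by
      have h := congrFun (hdy i) ((p:ℤ)*q + (j : ℤ))
      rw [substExt_apply τ p hp0 (ys (i+1)) q j hj] at h
      exact h.symm
    rw [e1, e2, hjeq]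
  -- choose the level and the position
  set i : ℕ := 2*N+1 with hidef
  have hpiN : 2*N+1 < p^i := by
    calc 2*N+1 < 2^(2*N+1) := Nat.lt_two_pow_self
      _ ≤ p^i := Nat.pow_le_pow_left hp _
  have hpiNZ : (2*(N:ℤ)+1) < (p:ℤ)^i := by exact_mod_cast hpiN
  obtain ⟨m, hm1, hm2⟩ := coin i ((M:ℤ)+2)
  have hpile : (1:ℤ) ≤ (p:ℤ)^i := one_le_pow₀ (by linarith)
  have hM0 : (0:ℤ) ≤ (M:ℤ) := Int.natCast_nonneg M
  have hmlb : (p:ℤ)*(M:ℤ) + p ≤ m := by linarith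
  have hmlb0 : (0:ℤ) ≤ (p:ℤ)*(M:ℤ) + p - 1 - M := by nlinarith
  have hML : (M:ℤ) ≤ (p:ℤ)^i * m - c i := by
    have h4 : (p:ℤ)^i * ((p:ℤ)*M + p) ≤ (p:ℤ)^i * m :=
      mul_le_mul_of_nonneg_left hmlb (by positivity)
    nlinarith [hcb i, mul_nonneg (by linarith : (0:ℤ) ≤ (p:ℤ)^i - 1) hmlb0]
  have hL0 : 0 ≤ (p:ℤ)^i * m - c i := le_trans hM0 hML
  refine ⟨((p:ℤ)^i * m - c i).toNat + N, by omega, ?_⟩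
  intro j hj
  obtain ⟨hj1, hj2⟩ := abs_le.mp hj
  have hLt : ((((p:ℤ)^i * m - c i).toNat : ℤ)) = (p:ℤ)^i * m - c i :=
    Int.toNat_of_nonneg hL0
  have harg : j + ((((p:ℤ)^i * m - c i).toNat + N : ℕ) : ℤ)
      = (p:ℤ)^i * m - c i + (j + N) := by push_cast [hLt]; ring
  rw [harg]
  exact key i m hm2 (j + N) (by linarith) (by linarith)
end

section
/- Let τ : A → A⁺ be a one-to-one primitive substitution of constant length p with X_τ infinite. Suppose there exist a ≠ b in A with τ(a) = uav, τ(b) = u'bv', where |u| = |u'| > 0, |v| = |v'|, v ≠ v', and v agrees with v' in at least one position. Then the points x = ...τ²(u)τ(u)u.av τ(v)τ²(v)... and y = ...τ²(u')τ(u')u'.bv' τ(v')τ²(v')... belong to X_τ and form a Li–Yorke pair for the shift. -/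
set_option linter.unusedSectionVars false


section helpers
variable {A : Type*} [Inhabited A] (τ : A → List A) (p : ℕ)

lemma substWord_append (w1 w2 : List A) :
    substWord τ (w1 ++ w2) = substWord τ w1 ++ substWord τ w2 := by
  simp [substWord]

lemma substWord_iter_append (m : ℕ) (w1 w2 : List A) :
    (substWord τ)^[m] (w1 ++ w2) = (substWord τ)^[m] w1 ++ (substWord τ)^[m] w2 := by
  induction m generalizing w1 w2 with
  | zero => simp
  | succ m ih => simp [Function.iterate_succ_apply, substWord_append, ih]

lemma substWord_len (hlen : ∀ a : A, (τ a).length = p) (w : List A) :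
    (substWord τ w).length = w.length * p := by
  induction w with
  | nil => simp [substWord]
  | cons c w ih =>
    have : substWord τ (c :: w) = τ c ++ substWord τ w := by simp [substWord]
    simp [this, ih, hlen c]; ring

lemma substWord_iter_len (hlen : ∀ a : A, (τ a).length = p) (m : ℕ) (w : List A) :
    ((substWord τ)^[m] w).length = w.length * p ^ m := by
  induction m generalizing w with
  | zero => simp
  | succ m ih =>
    rw [Function.iterate_succ_apply, ih, substWord_len τ p hlen, pow_succ]
    ring

lemma substWord_iter_getD (hlen : ∀ a : A, (τ a).length = p) (m q r : ℕ) (w : List A)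
    (hq : q < w.length) (hr : r < p ^ m) :
    ((substWord τ)^[m] w).getD (q * p ^ m + r) default
      = ((substWord τ)^[m] [w.getD q default]).getD r default := by
  induction w generalizing q with
  | nil => simp at hq
  | cons c w ih =>
    have hdec : (substWord τ)^[m] (c :: w)
        = (substWord τ)^[m] [c] ++ (substWord τ)^[m] w := by
      have : (c :: w) = [c] ++ w := rfl
      rw [this, substWord_iter_append]
    have hlen1 : ((substWord τ)^[m] [c]).length = p ^ m := by
      rw [substWord_iter_len τ p hlen]; simp
    cases q with
    | zero =>
      rw [hdec]
      simp only [Nat.zero_mul, Nat.zero_add]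
      rw [List.getD_append _ _ _ _ (by omega)]
      simp
    | succ q =>
      rw [hdec, List.getD_append_right _ _ _ _ (by rw [hlen1]; nlinarith)]
      have harith : (q + 1) * p ^ m + r - ((substWord τ)^[m] [c]).length = q * p ^ m + r := by
        rw [hlen1]; ring_nf; omega
      rw [harith, ih q (by simpa using hq)]
      simp

lemma substWord_inj_words (hlen : ∀ a : A, (τ a).length = p)
    (hinj : Function.Injective τ) :
    ∀ w1 w2 : List A, w1.length = w2.length → substWord τ w1 = substWord τ w2 → w1 = w2 := by
  intro w1
  induction w1 with
  | nil => intro w2 h _; exact (List.length_eq_zero_iff.mp h.symm).symm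
  | cons c w ih =>
    intro w2 h heq
    cases w2 with
    | nil => simp at h
    | cons c2 w2 =>
      have h1 : substWord τ (c :: w) = τ c ++ substWord τ w := by simp [substWord]
      have h2 : substWord τ (c2 :: w2) = τ c2 ++ substWord τ w2 := by simp [substWord]
      rw [h1, h2] at heq
      obtain ⟨hh, ht⟩ := List.append_inj heq (by rw [hlen, hlen])
      have := hinj hh
      subst this
      simp at h
      rw [ih w2 h ht]

lemma substWord_iter_inj (hlen : ∀ a : A, (τ a).length = p)
    (hinj : Function.Injective τ) (m : ℕ) :
    ∀ w1 w2 : List A, w1.length = w2.length →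
      (substWord τ)^[m] w1 = (substWord τ)^[m] w2 → w1 = w2 := by
  induction m with
  | zero => intro w1 w2 _ h; simpa using h
  | succ m ih =>
    intro w1 w2 hl h
    rw [Function.iterate_succ_apply, Function.iterate_succ_apply] at h
    exact substWord_inj_words τ p hlen hinj w1 w2 hl
      (ih _ _ (by rw [substWord_len τ p hlen, substWord_len τ p hlen, hl]) h)

lemma exists_getD_ne {l1 l2 : List A} (hl : l1.length = l2.length) (hne : l1 ≠ l2) :
    ∃ k, k < l1.length ∧ l1.getD k default ≠ l2.getD k default := by
  by_contra h
  push_neg at h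
  exact hne (List.ext_getElem hl fun n h1 h2 => by
    have := h n h1
    rwa [List.getD_eq_getElem _ _ h1, List.getD_eq_getElem _ _ h2] at this)

lemma ofFn_getD_isInfix (L : List A) (s l : ℕ) (h : s + l ≤ L.length) :
    (List.ofFn fun j : Fin l => L.getD (s + (j : ℕ)) default) <:+: L := by
  have heq : (List.ofFn fun j : Fin l => L.getD (s + (j : ℕ)) default)
      = (L.drop s).take l := by
    apply List.ext_getElem
    · simp; omega
    · intro n h1 h2
      simp only [List.getElem_ofFn, List.getElem_take, List.getElem_drop]
      rw [List.getD_eq_getElem _ _ (by simp at h1 ⊢; omega)]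
  rw [heq]
  exact (List.take_prefix l _).isInfix.trans (List.drop_suffix s L).isInfix

lemma mem_XSet_aux (hp : 2 ≤ p)
    (hlen : ∀ a : A, (τ a).length = p) (L : ℕ → ℕ) (c : A) (z : ℤ → A)
    (hL1 : ∀ m, p ^ m ≤ L (m+1))
    (hL2 : ∀ m, L (m+1) + p ^ m + 1 ≤ p ^ (m+1))
    (hz : ∀ m j : ℕ, j < p ^ m → z (-(L m : ℤ) + j) = ((substWord τ)^[m] [c]).getD j default) :
    z ∈ XSet τ := by
  intro i l
  set m := i.natAbs + l with hmdef
  have hm : i.natAbs + l < p ^ m := Nat.lt_pow_self (by omega)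
  set M := m + 1 with hM
  refine ⟨M, c, ?_⟩
  have h1 : p ^ m ≤ L M := hL1 m
  have h2 : L M + p ^ m + 1 ≤ p ^ M := hL2 m
  have hiL : -(L M : ℤ) ≤ i := by
    have : (i.natAbs : ℤ) ≤ (L M : ℤ) := by exact_mod_cast by omega
    omega
  set s := (i + L M).toNat with hsdef
  have hs : (s : ℤ) = i + L M := Int.toNat_of_nonneg (by omega)
  have hsl : s + l ≤ p ^ M := by
    have hz1 : (s : ℤ) + l < (p : ℤ) ^ M := by
      have hia : i ≤ (i.natAbs : ℤ) := Int.le_natAbs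
      have hm' : ((m : ℤ)) < (p:ℤ) ^ m := by exact_mod_cast hm
      have h2' : ((L M : ℤ)) + (p:ℤ)^m + 1 ≤ (p:ℤ)^M := by exact_mod_cast h2
      have hmz : ((i.natAbs : ℤ)) + l = (m : ℤ) := by push_cast [hmdef]; ring
      omega
    have : (s + l : ℤ) < ((p ^ M : ℕ) : ℤ) := by push_cast; omega
    exact_mod_cast le_of_lt this
  have hword : (List.ofFn fun j : Fin l => z (i + (j:ℤ)))
      = List.ofFn fun j : Fin l => ((substWord τ)^[M] [c]).getD (s + (j:ℕ)) default := by
    apply congrArg List.ofFn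
    funext j
    have hj : s + (j:ℕ) < p ^ M := by have := j.isLt; omega
    rw [← hz M (s + j) hj]
    congr 1
    push_cast
    omega
  rw [hword]
  exact ofFn_getD_isInfix _ s l (by rw [substWord_iter_len τ p hlen]; simpa using hsl)

end helpers

/-- Proposition 3.5 (sufficiency): from `τ(a) = u a v`, `τ(b) = u' b v'` with
`|u| = |u'| > 0`, `|v| = |v'|`, `v ≠ v'` and a coincidence between `v` and
`v'`, the fixed-point-like sequences
`x = …τ²(u)τ(u)u . a v τ(v) τ²(v)…` and `y = …τ²(u')τ(u')u' . b v' τ(v') …`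
belong to `X_τ` and form a Li–Yorke pair. Here `x` is characterized by the
fact that for every `m`, `τᵐ(a)` occurs in `x` on the window starting at
`-|u|·(1 + p + ⋯ + pᵐ⁻¹)` (and similarly for `y`). -/
theorem stmt10 {A : Type*} [Fintype A] [Inhabited A]
    (τ : A → List A) (p : ℕ) (hp : 2 ≤ p)
    (hlen : ∀ a : A, (τ a).length = p)
    (hprim : IsPrimitive τ) (hinj : Function.Injective τ)
    (hinf : (XSet τ).Infinite)
    (a b : A) (hab : a ≠ b) (u v u' v' : List A)
    (hτa : τ a = u ++ a :: v) (hτb : τ b = u' ++ b :: v')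
    (hu : u.length = u'.length) (hu0 : 0 < u.length)
    (hv : v.length = v'.length) (hvne : v ≠ v')
    (hco : ∃ j : ℕ, j < v.length ∧ v.getD j default = v'.getD j default)
    (x y : ℤ → A)
    (hx : ∀ m j : ℕ, j < p ^ m →
      x (-((u.length : ℤ) * ∑ i ∈ Finset.range m, (p : ℤ) ^ i) + (j : ℤ)) =
        ((substWord τ)^[m] [a]).getD j default)
    (hy : ∀ m j : ℕ, j < p ^ m →
      y (-((u'.length : ℤ) * ∑ i ∈ Finset.range m, (p : ℤ) ^ i) + (j : ℤ)) =
        ((substWord τ)^[m] [b]).getD j default) :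
    x ∈ XSet τ ∧ y ∈ XSet τ ∧ IsLiYorkePair x y := by
  classical
  -- basic length facts
  have hpu : u.length + 1 + v.length = p := by
    have h := hlen a
    rw [hτa] at h
    simp at h
    omega
  have hv0 : 0 < v.length := by
    rcases Nat.eq_zero_or_pos v.length with h | h
    · exfalso
      apply hvne
      have h1 : v = [] := List.length_eq_zero_iff.mp h
      have h2 : v' = [] := List.length_eq_zero_iff.mp (by omega)
      rw [h1, h2]
    · exact h
  have hup : u.length + 2 ≤ p := by omega
  -- the left-edge sequence
  set L : ℕ → ℕ := fun m => u.length * ∑ i ∈ Finset.range m, p ^ i with hLdef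
  have hLsucc : ∀ m, L (m+1) = L m + u.length * p ^ m := by
    intro m
    simp only [hLdef, Finset.sum_range_succ, Nat.mul_add]
  have hL1 : ∀ m, p ^ m ≤ L (m+1) := by
    intro m
    have h1 : p ^ m ≤ ∑ i ∈ Finset.range (m+1), p ^ i := by
      rw [Finset.sum_range_succ]; omega
    calc p ^ m ≤ ∑ i ∈ Finset.range (m+1), p ^ i := h1
      _ ≤ u.length * ∑ i ∈ Finset.range (m+1), p ^ i := Nat.le_mul_of_pos_left _ hu0
  have hL2 : ∀ m, L (m+1) + p ^ m + 1 ≤ p ^ (m+1) := by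
    intro m
    induction m with
    | zero =>
      have he : L (0+1) = u.length := by simp [hLdef]
      rw [he, pow_zero, pow_one]
      omega
    | succ m ih =>
      have hs1 := hLsucc (m+1)
      have hpw : p ^ (m+2) = p * p ^ (m+1) := by ring
      have hmul : (u.length + 2) * p ^ (m+1) ≤ p * p ^ (m+1) :=
        Nat.mul_le_mul_right _ hup
      have hpos : 1 ≤ p ^ m := Nat.one_le_pow _ _ (by omega)
      nlinarith [ih]
  -- recast the defining properties of x and y
  have hcast : ∀ m : ℕ, ((u.length : ℤ) * ∑ i ∈ Finset.range m, (p : ℤ) ^ i) = (L m : ℤ) := by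
    intro m
    simp only [hLdef]
    push_cast
    ring
  have hx' : ∀ m j : ℕ, j < p ^ m →
      x (-(L m : ℤ) + j) = ((substWord τ)^[m] [a]).getD j default := by
    intro m j hj
    rw [← hcast m]
    exact hx m j hj
  have hy' : ∀ m j : ℕ, j < p ^ m →
      y (-(L m : ℤ) + j) = ((substWord τ)^[m] [b]).getD j default := by
    intro m j hj
    have h := hy m j hj
    rwa [← hu, hcast m] at h
  -- membership
  have hxX : x ∈ XSet τ := mem_XSet_aux τ p hp hlen L a x hL1 hL2 hx'
  have hyX : y ∈ XSet τ := mem_XSet_aux τ p hp hlen L b y hL1 hL2 hy'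
  refine ⟨hxX, hyX, ?_, ?_⟩
  · -- proximality
    obtain ⟨j0, hj0, hj0eq⟩ := hco
    have hqp : u.length + 1 + j0 < p := by omega
    have hblock : ∀ (e : A) (w z : List A), τ e = w ++ e :: z → ∀ (m q k : ℕ), q < p → k < p ^ m →
        ((substWord τ)^[m+1] [e]).getD (q * p ^ m + k) default
          = ((substWord τ)^[m] [(w ++ e :: z).getD q default]).getD k default := by
      intro e w z he m q k hq hk
      rw [Function.iterate_succ_apply]
      have h1 : substWord τ [e] = τ e := by simp [substWord]
      rw [h1, he, substWord_iter_getD τ p hlen m q k _ (by rw [← he, hlen]; omega) hk]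
    have hgetv : ∀ (e : A) (w z : List A), w.length = u.length →
        (w ++ e :: z).getD (u.length + 1 + j0) default = z.getD j0 default := by
      intro e w z hw
      rw [List.getD_append_right _ _ _ _ (by omega)]
      have h5 : u.length + 1 + j0 - w.length = j0 + 1 := by omega
      rw [h5, List.getD_cons_succ]
    have hagree : ∀ m k : ℕ, k < p ^ m →
        x ((((u.length + 1 + j0) * p ^ m : ℕ) : ℤ) - (L (m+1) : ℤ) + k)
          = y ((((u.length + 1 + j0) * p ^ m : ℕ) : ℤ) - (L (m+1) : ℤ) + k) := by
      intro m k hk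
      have hjlt : (u.length + 1 + j0) * p ^ m + k < p ^ (m+1) := by
        have h1 : (u.length + 1 + j0) * p ^ m + k < (u.length + 1 + j0 + 1) * p ^ m := by
          nlinarith
        have h2 : (u.length + 1 + j0 + 1) * p ^ m ≤ p * p ^ m :=
          Nat.mul_le_mul_right _ (by omega)
        have h3 : p ^ (m+1) = p * p ^ m := by ring
        omega
      have hcoord : (((u.length + 1 + j0) * p ^ m : ℕ) : ℤ) - (L (m+1) : ℤ) + k
          = -(L (m+1) : ℤ) + (((u.length + 1 + j0) * p ^ m + k : ℕ) : ℤ) := by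
        push_cast; ring
      rw [hcoord, hx' (m+1) _ hjlt, hy' (m+1) _ hjlt,
          hblock a u v hτa m _ k hqp hk, hblock b u' v' hτb m _ k hqp hk,
          hgetv a u v rfl, hgetv b u' v' hu.symm, hj0eq]
    intro N M
    set m0 := M + 2*N + 1 with hm0def
    have hm0 : M + 2*N + 1 < p ^ m0 := Nat.lt_pow_self (by omega)
    have hLs : L (m0+2) = L (m0+1) + u.length * p ^ (m0+1) := hLsucc (m0+1)
    have h2 := hL2 m0
    have hlow : L (m0+2) + p ^ m0 + 1 ≤ (u.length + 1 + j0) * p ^ (m0+1) := by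
      have h3 : L (m0+1) + p ^ m0 + 1 ≤ p ^ (m0+1) := h2
      nlinarith
    set t : ℕ := (u.length + 1 + j0) * p ^ (m0+1) - L (m0+2) with htdef
    have ht : (t : ℤ) = (((u.length + 1 + j0) * p ^ (m0+1) : ℕ) : ℤ) - (L (m0+2) : ℤ) := by
      rw [htdef, Nat.cast_sub (by omega)]
    have ht' : (t : ℤ) = ((u.length : ℤ) + 1 + j0) * (p : ℤ) ^ (m0+1) - (L (m0+2) : ℤ) := by
      rw [ht]; push_cast; ring
    have htlow : p ^ m0 + 1 ≤ t := by omega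
    refine ⟨t + N, by omega, ?_⟩
    intro j hj
    have hj' := abs_le.mp hj
    set k := ((N : ℤ) + j).toNat with hkdef
    have hk : (k : ℤ) = (N : ℤ) + j := Int.toNat_of_nonneg (by omega)
    have hklt : k < p ^ (m0+1) := by
      have hpm : p ^ m0 ≤ p ^ (m0+1) := Nat.pow_le_pow_right (by omega) (by omega)
      omega
    have hag := hagree (m0+1) k hklt
    have hcoord : j + ((t + N : ℕ) : ℤ)
        = (((u.length + 1 + j0) * p ^ (m0+1) : ℕ) : ℤ) - (L (m0+2) : ℤ) + k := by
      push_cast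
      linear_combination ht' - hk
    rw [hcoord]
    exact hag
  · -- infinitely many differences
    apply Set.infinite_of_not_bddAbove
    rintro ⟨B, hB⟩
    set m0 := B.toNat with hm0def
    have hm0 : B.toNat < p ^ m0 := Nat.lt_pow_self (by omega)
    set m := m0 + 1 with hmdef
    have hWlen : ((substWord τ)^[m] v).length = v.length * p ^ m :=
      substWord_iter_len τ p hlen m v
    have hW'len : ((substWord τ)^[m] v').length = v.length * p ^ m := by
      rw [substWord_iter_len τ p hlen, hv]
    have hWne : (substWord τ)^[m] v ≠ (substWord τ)^[m] v' := fun h =>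
      hvne (substWord_iter_inj τ p hlen hinj m v v' hv h)
    obtain ⟨k, hk, hkne⟩ := exists_getD_ne (by rw [hWlen, hW'len]) hWne
    rw [hWlen] at hk
    have hLs : L (m+1) = L m + u.length * p ^ m := hLsucc m
    have h2 : L m + p ^ m0 + 1 ≤ p ^ m := hL2 m0
    have hlow : L (m+1) + p ^ m0 + 1 ≤ (u.length + 1) * p ^ m := by nlinarith
    set s : ℕ := (u.length + 1) * p ^ m - L (m+1) with hsdef
    have hs : (s : ℤ) = (((u.length + 1) * p ^ m : ℕ) : ℤ) - (L (m+1) : ℤ) := by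
      rw [hsdef, Nat.cast_sub (by omega)]
    have hs' : (s : ℤ) = ((u.length : ℤ) + 1) * (p : ℤ) ^ m - (L (m+1) : ℤ) := by
      rw [hs]; push_cast; ring
    have hjlt : (u.length + 1) * p ^ m + k < p ^ (m+1) := by
      have h3 : (u.length + 1 + v.length) * p ^ m = p ^ (m+1) := by
        rw [hpu]; ring
      nlinarith
    have hdecomp : ∀ (e : A) (w z : List A), τ e = w ++ e :: z → w.length = u.length →
        ((substWord τ)^[m+1] [e]).getD ((u.length + 1) * p ^ m + k) default
          = ((substWord τ)^[m] z).getD k default := by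
      intro e w z he hw
      rw [Function.iterate_succ_apply]
      have h1 : substWord τ [e] = τ e := by simp [substWord]
      have h3 : τ e = (w ++ [e]) ++ z := by rw [he]; simp
      have h4 : ((substWord τ)^[m] (w ++ [e])).length = (u.length + 1) * p ^ m := by
        rw [substWord_iter_len τ p hlen]
        simp [hw]
      rw [h1, h3, substWord_iter_append,
        List.getD_append_right _ _ _ _ (by rw [h4]; omega),
        h4, Nat.add_sub_cancel_left]
    have hcoord : (s : ℤ) + k = -(L (m+1) : ℤ) + (((u.length + 1) * p ^ m + k : ℕ) : ℤ) := by
      push_cast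
      linear_combination hs'
    have hxp : x ((s : ℤ) + k) = ((substWord τ)^[m] v).getD k default := by
      rw [hcoord, hx' (m+1) _ hjlt, hdecomp a u v hτa rfl]
    have hyp : y ((s : ℤ) + k) = ((substWord τ)^[m] v').getD k default := by
      rw [hcoord, hy' (m+1) _ hjlt, hdecomp b u' v' hτb hu.symm]
    have hmem : ((s : ℤ) + k) ∈ {m : ℤ | x m ≠ y m} := by
      simp only [Set.mem_setOf_eq]
      rw [hxp, hyp]
      exact hkne
    have hle := hB hmem
    have hBb : B ≤ (B.toNat : ℤ) := Int.self_le_toNat B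
    have hsm : (p ^ m0 : ℕ) + 1 ≤ s := by omega
    have hsm' : ((p ^ m0 : ℕ) : ℤ) + 1 ≤ (s : ℤ) := by exact_mod_cast hsm
    have hm0' : ((B.toNat : ℕ) : ℤ) < ((p ^ m0 : ℕ) : ℤ) := by exact_mod_cast hm0
    omega
end

section
/- Let A = {0,...,n} with n ≥ 1 and τₙ : A → A³ the constant-length-3 substitution τₙ(a) = a 0 (a+1) for a ≠ n and τₙ(n) = n 0 n. Then τₙ is primitive. -/
/-- The substitution `τₙ` on `{0,…,n}`: `τₙ(a) = a 0 (a+1)` for `a ≠ n` and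
`τₙ(n) = n 0 n`. -/
def tauN (n : ℕ) : Fin (n + 1) → List (Fin (n + 1)) :=
  fun a => [a, ⟨0, Nat.succ_pos n⟩, ⟨min (a.1 + 1) n, by omega⟩]

lemma mem_step {A : Type*} (τ : A → List A) {c : A} {w : List A} (h : c ∈ w)
    {d : A} (hd : d ∈ τ c) : d ∈ substWord τ w :=
  List.mem_flatten.mpr ⟨τ c, List.mem_map_of_mem (f := τ) h, hd⟩

lemma mem_persist {n : ℕ} : ∀ (m : ℕ) {w : List (Fin (n+1))} {c : Fin (n+1)},
    c ∈ w → c ∈ (substWord (tauN n))^[m] w := by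
  intro m
  induction m with
  | zero => intro w c h; simpa using h
  | succ k ih =>
    intro w c h
    rw [Function.iterate_succ_apply]
    exact ih (mem_step _ h (by simp [tauN]))

/-- For `n ≥ 1` the substitution `τₙ` is primitive. -/
theorem stmt17 (n : ℕ) (hn : 1 ≤ n) : IsPrimitive (tauN n) := by
  refine ⟨n + 1, fun a b => ?_⟩
  have key : ∀ k : ℕ, (⟨min k n, by omega⟩ : Fin (n+1)) ∈
      (substWord (tauN n))^[k + 1] [b] := by
    intro k
    induction k with
    | zero =>
      have : (⟨min 0 n, by omega⟩ : Fin (n+1)) = ⟨0, Nat.succ_pos n⟩ :=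
        Fin.mk_eq_mk.mpr (by omega)
      rw [this]
      exact mem_step _ (List.mem_singleton.mpr rfl) (by simp [tauN])
    | succ k ih =>
      rw [Function.iterate_succ_apply']
      refine mem_step _ ih ?_
      have : (⟨min (k+1) n, by omega⟩ : Fin (n+1)) =
          ⟨min (min k n + 1) n, by omega⟩ :=
        Fin.mk_eq_mk.mpr (by omega)
      rw [this]
      simp [tauN]
  have ha : a = ⟨min a.1 n, by omega⟩ :=
    Fin.ext (by simp; omega)
  have h1 : a ∈ (substWord (tauN n))^[a.1 + 1] [b] := by
    have h := key a.1; rwa [← ha] at h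
  have h4 : a ∈ (substWord (tauN n))^[(n - a.1) + (a.1 + 1)] [b] := by
    rw [Function.iterate_add_apply]; exact mem_persist _ h1
  simpa [show (n - a.1) + (a.1 + 1) = n + 1 from by omega] using h4
end
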